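/- Suppose m : ℝ → ℝ is even, continuously differentiable, satisfies |m'(ξ)| ≤ C(1+|ξ|)^{m₀-1} for some m₀ ∈ (-1,0), and c - m(ξ) ≥ ε > 0 for all ξ. Then for H_c(x) = (2π)^{-1/2} ∫ (m(ξ)/(c-m(ξ))) e^{ixξ} dξ (interpreted via the derivative as in the paper), one has |x·H_c(x)| ≤ K·|x|^{-m₀} for all x > 0, where K depends only on C, ε, c, m₀; consequently |H_c(x)| ≲ |x|^{-1-m₀} for small x. -/

import Mathlib

open MeasureTheory Real Set

theorem stmt1 (m H : ℝ → ℝ) (C m₀ c ε : ℝ) (hC : 0 < C) (hε : 0 < ε)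
    (hm₀ : m₀ ∈ Set.Ioo (-1 : ℝ) 0)
    (heven : ∀ ξ, m (-ξ) = m ξ) (hdiff : ContDiff ℝ 1 m)
    (hbound : ∀ ξ : ℝ, |deriv m ξ| ≤ C * (1 + |ξ|) ^ (m₀ - 1))
    (hc : ∀ ξ, ε ≤ c - m ξ)
    (hH : ∀ x : ℝ, 0 < x →
      x * H x = -(Real.sqrt (2 * Real.pi))⁻¹ *
        ∫ ξ : ℝ, (c * deriv m ξ / (c - m ξ) ^ 2) * Real.sin (x * ξ)) :
    ∃ K > 0, (∀ x : ℝ, 0 < x → |x * H x| ≤ K * x ^ (-m₀)) ∧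
      ∀ x : ℝ, 0 < x → x < 1 → |H x| ≤ K * x ^ (-1 - m₀) := by
  obtain ⟨hm₁, hm₂⟩ := hm₀
  have hm₁' : (0:ℝ) < m₀ + 1 := by linarith
  have hm₂' : (0:ℝ) < -m₀ := by linarith
  set g : ℝ → ℝ := fun ξ => c * deriv m ξ / (c - m ξ) ^ 2 with hgdef
  set B : ℝ := |c| * C / ε ^ 2 + 1 with hBdef
  have hB : 0 < B := by positivity
  -- denominator bound
  have hden : ∀ ξ, ε ^ 2 ≤ (c - m ξ) ^ 2 := by
    intro ξ; have := hc ξ; nlinarith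
  have hdenpos : ∀ ξ, (0:ℝ) < (c - m ξ) ^ 2 := fun ξ => lt_of_lt_of_le (by positivity) (hden ξ)
  -- bound on g
  have hgb : ∀ ξ, |g ξ| ≤ B * (1 + |ξ|) ^ (m₀ - 1) := by
    intro ξ
    have hrp : (0:ℝ) < (1 + |ξ|) ^ (m₀ - 1) := by positivity
    have h2 : |g ξ| = |c| * |deriv m ξ| / (c - m ξ) ^ 2 := by
      rw [hgdef]; rw [abs_div, abs_mul, abs_of_pos (hdenpos ξ)]
    rw [h2]
    have step1 : |c| * |deriv m ξ| / (c - m ξ) ^ 2 ≤ |c| * |deriv m ξ| / ε ^ 2 := by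
      gcongr
      exact hc ξ
    have step2 : |c| * |deriv m ξ| / ε ^ 2 ≤ |c| * (C * (1 + |ξ|) ^ (m₀ - 1)) / ε ^ 2 := by
      gcongr
      exact hbound ξ
    have step3 : |c| * (C * (1 + |ξ|) ^ (m₀ - 1)) / ε ^ 2 ≤ B * (1 + |ξ|) ^ (m₀ - 1) := by
      rw [hBdef]
      have : |c| * (C * (1 + |ξ|) ^ (m₀ - 1)) / ε ^ 2
          = (|c| * C / ε ^ 2) * (1 + |ξ|) ^ (m₀ - 1) := by ring
      rw [this]
      have h1 : (|c| * C / ε ^ 2) ≤ |c| * C / ε ^ 2 + 1 := by linarith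
      exact mul_le_mul_of_nonneg_right h1 hrp.le
    linarith
  -- continuity of g
  have hmd : Continuous (deriv m) := hdiff.continuous_deriv le_rfl
  have hgc : Continuous g := by
    apply Continuous.div (continuous_const.mul hmd)
      ((continuous_const.sub hdiff.continuous).pow 2)
    exact fun ξ => (hdenpos ξ).ne'
  -- deriv m is odd
  have hodd : ∀ ξ, deriv m (-ξ) = -deriv m ξ := by
    intro ξ
    have h1 : (fun t => m (-t)) = m := funext heven
    have h2 : deriv (fun t => m (-t)) ξ = -deriv m (-ξ) := deriv_comp_neg m ξ
    rw [h1] at h2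
    linarith [h2]
  -- the dominating integrable function
  have hdom : Integrable (fun ξ : ℝ => B * (1 + |ξ|) ^ (m₀ - 1)) := by
    have h : (1:ℝ) < 1 - m₀ := by linarith
    have := (integrable_one_add_norm (E := ℝ) (μ := volume) (r := 1 - m₀) (by simpa using h))
    have h2 : (fun ξ : ℝ => (1 + ‖ξ‖) ^ (-(1 - m₀))) = fun ξ : ℝ => (1 + |ξ|) ^ (m₀ - 1) := by
      funext ξ; rw [Real.norm_eq_abs]; ring_nf
    rw [h2] at this
    exact this.const_mul B
  -- main estimate
  set A : ℝ := 2 * (B / (m₀ + 1) + B / (-m₀)) with hAdef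
  have hA : 0 < A := by positivity
  have key : ∀ x : ℝ, 0 < x → |∫ ξ : ℝ, g ξ * Real.sin (x * ξ)| ≤ A * x ^ (-m₀) := by
    intro x hx
    set F : ℝ → ℝ := fun ξ => g ξ * Real.sin (x * ξ) with hFdef
    have hFc : Continuous F := hgc.mul (Real.continuous_sin.comp (continuous_const.mul continuous_id))
    have hFb : ∀ ξ, |F ξ| ≤ B * (1 + |ξ|) ^ (m₀ - 1) := by
      intro ξ
      rw [hFdef, abs_mul]
      calc |g ξ| * |Real.sin (x * ξ)| ≤ |g ξ| * 1 :=
            mul_le_mul_of_nonneg_left (Real.abs_sin_le_one _) (abs_nonneg _)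
        _ = |g ξ| := mul_one _
        _ ≤ B * (1 + |ξ|) ^ (m₀ - 1) := hgb ξ
    have hFint : Integrable F := by
      refine hdom.mono' hFc.aestronglyMeasurable ?_
      filter_upwards with ξ
      rw [Real.norm_eq_abs]; exact hFb ξ
    -- F is even
    have hFeven : ∀ ξ, F (-ξ) = F ξ := by
      intro ξ
      rw [hFdef]
      simp only [hgdef, hodd ξ, heven ξ, mul_neg, neg_div, Real.sin_neg, neg_mul, mul_neg,
        neg_neg]
    have habs : ∀ ξ, F |ξ| = F ξ := by
      intro ξ
      rcases le_or_gt 0 ξ with h | h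
      · rw [abs_of_nonneg h]
      · rw [abs_of_neg h, hFeven]
    set a : ℝ := x⁻¹ with hadef
    have ha : 0 < a := inv_pos.mpr hx
    -- pointwise bounds on the two pieces
    have pb1 : ∀ ξ ∈ Ioc (0:ℝ) a, |F ξ| ≤ B * x * ξ ^ m₀ := by
      rintro ξ ⟨hξ0, _⟩
      have h1 : |Real.sin (x * ξ)| ≤ x * ξ :=
        calc |Real.sin (x * ξ)| ≤ |x * ξ| := Real.abs_sin_le_abs
          _ = x * ξ := abs_of_pos (mul_pos hx hξ0)
      have h2 : (1 + ξ) ^ (m₀ - 1) ≤ ξ ^ (m₀ - 1) :=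
        Real.rpow_le_rpow_of_nonpos hξ0 (by linarith) (by linarith)
      have h3 : |g ξ| ≤ B * ξ ^ (m₀ - 1) := by
        calc |g ξ| ≤ B * (1 + |ξ|) ^ (m₀ - 1) := hgb ξ
          _ = B * (1 + ξ) ^ (m₀ - 1) := by rw [abs_of_pos hξ0]
          _ ≤ B * ξ ^ (m₀ - 1) := by
              exact mul_le_mul_of_nonneg_left h2 hB.le
      rw [hFdef, abs_mul]
      calc |g ξ| * |Real.sin (x * ξ)| ≤ (B * ξ ^ (m₀ - 1)) * (x * ξ) := by
            apply mul_le_mul h3 h1 (abs_nonneg _) (by positivity)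
        _ = B * x * (ξ ^ (m₀ - 1) * ξ) := by ring
        _ = B * x * ξ ^ m₀ := by
            rw [← Real.rpow_add_one hξ0.ne']; ring_nf
    have pb2 : ∀ ξ ∈ Ioi a, |F ξ| ≤ B * ξ ^ (m₀ - 1) := by
      intro ξ hξ
      have hξ0 : 0 < ξ := lt_trans ha hξ
      have h2 : (1 + ξ) ^ (m₀ - 1) ≤ ξ ^ (m₀ - 1) :=
        Real.rpow_le_rpow_of_nonpos hξ0 (by linarith) (by linarith)
      calc |F ξ| ≤ B * (1 + |ξ|) ^ (m₀ - 1) := hFb ξ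
        _ = B * (1 + ξ) ^ (m₀ - 1) := by rw [abs_of_pos hξ0]
        _ ≤ B * ξ ^ (m₀ - 1) := mul_le_mul_of_nonneg_left h2 hB.le
    -- integrability of bounds
    have hint1 : IntegrableOn (fun ξ : ℝ => B * x * ξ ^ m₀) (Ioc 0 a) := by
      have := (intervalIntegral.intervalIntegrable_rpow' (a := 0) (b := a) hm₁)
      rw [intervalIntegrable_iff_integrableOn_Ioc_of_le ha.le] at this
      exact this.const_mul _
    have hint2 : IntegrableOn (fun ξ : ℝ => B * ξ ^ (m₀ - 1)) (Ioi a) := by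
      exact (integrableOn_Ioi_rpow_of_lt (by linarith) ha).const_mul _
    -- split the integral
    have hsplit : ∫ ξ : ℝ, F ξ = 2 * ((∫ ξ in Ioc (0:ℝ) a, F ξ) + ∫ ξ in Ioi a, F ξ) := by
      have h1 : ∫ ξ : ℝ, F ξ = ∫ ξ : ℝ, F |ξ| := by
        congr 1; funext ξ; rw [habs]
      rw [h1, integral_comp_abs (f := F)]
      congr 1
      rw [← Ioc_union_Ioi_eq_Ioi ha.le,
        setIntegral_union (Ioc_disjoint_Ioi le_rfl) measurableSet_Ioi
          (hFint.integrableOn) (hFint.integrableOn)]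
    -- integral values
    have hval1 : ∫ ξ in Ioc (0:ℝ) a, B * x * ξ ^ m₀ = B * x ^ (-m₀) / (m₀ + 1) := by
      rw [← intervalIntegral.integral_of_le ha.le, intervalIntegral.integral_const_mul,
        integral_rpow (Or.inl hm₁)]
      rw [Real.zero_rpow (by linarith : m₀ + 1 ≠ 0), sub_zero, hadef,
        ← Real.rpow_neg_one x, ← Real.rpow_mul hx.le,
        show ((-1:ℝ) * (m₀ + 1)) = -(m₀+1) by ring]
      rw [show B * x * (x ^ (-(m₀ + 1)) / (m₀ + 1))
            = B * (x ^ (1:ℝ) * x ^ (-(m₀+1))) / (m₀+1) by rw [Real.rpow_one]; ring,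
        ← Real.rpow_add hx, show (1:ℝ) + -(m₀+1) = -m₀ by ring]
    have hval2 : ∫ ξ in Ioi a, B * ξ ^ (m₀ - 1) = B * x ^ (-m₀) / (-m₀) := by
      rw [MeasureTheory.integral_const_mul, integral_Ioi_rpow_of_lt (by linarith) ha]
      rw [show m₀ - 1 + 1 = m₀ by ring, hadef, ← Real.rpow_neg_one x,
        ← Real.rpow_mul hx.le]
      rw [show ((-1:ℝ) * m₀) = -m₀ by ring]
      field_simp
    -- put together
    have hb1 : |∫ ξ in Ioc (0:ℝ) a, F ξ| ≤ B * x ^ (-m₀) / (m₀ + 1) := by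
      rw [← hval1]
      calc |∫ ξ in Ioc (0:ℝ) a, F ξ| ≤ ∫ ξ in Ioc (0:ℝ) a, |F ξ| := by
            simpa [Real.norm_eq_abs] using
              norm_integral_le_integral_norm (μ := volume.restrict (Ioc (0:ℝ) a)) F
        _ ≤ ∫ ξ in Ioc (0:ℝ) a, B * x * ξ ^ m₀ :=
            setIntegral_mono_on (hFint.abs.integrableOn) hint1 measurableSet_Ioc pb1
    have hb2 : |∫ ξ in Ioi a, F ξ| ≤ B * x ^ (-m₀) / (-m₀) := by
      rw [← hval2]
      calc |∫ ξ in Ioi a, F ξ| ≤ ∫ ξ in Ioi a, |F ξ| := by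
            simpa [Real.norm_eq_abs] using
              norm_integral_le_integral_norm (μ := volume.restrict (Ioi a)) F
        _ ≤ ∫ ξ in Ioi a, B * ξ ^ (m₀ - 1) :=
            setIntegral_mono_on (hFint.abs.integrableOn) hint2 measurableSet_Ioi pb2
    rw [hsplit]
    calc |2 * ((∫ ξ in Ioc (0:ℝ) a, F ξ) + ∫ ξ in Ioi a, F ξ)|
        = 2 * |(∫ ξ in Ioc (0:ℝ) a, F ξ) + ∫ ξ in Ioi a, F ξ| := by
          rw [abs_mul, abs_two]
      _ ≤ 2 * (|∫ ξ in Ioc (0:ℝ) a, F ξ| + |∫ ξ in Ioi a, F ξ|) := by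
          have := abs_add_le (∫ ξ in Ioc (0:ℝ) a, F ξ) (∫ ξ in Ioi a, F ξ)
          linarith
      _ ≤ 2 * (B * x ^ (-m₀) / (m₀ + 1) + B * x ^ (-m₀) / (-m₀)) := by linarith
      _ = A * x ^ (-m₀) := by rw [hAdef]; ring
  -- assemble K
  have hsq : (0:ℝ) < Real.sqrt (2 * Real.pi) := Real.sqrt_pos.mpr (by positivity)
  set K : ℝ := (Real.sqrt (2 * Real.pi))⁻¹ * A with hKdef
  have hK : 0 < K := by positivity
  refine ⟨K, hK, ?_, ?_⟩
  · intro x hx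
    rw [hH x hx, abs_mul, abs_neg, abs_inv, abs_of_pos hsq]
    calc (Real.sqrt (2 * Real.pi))⁻¹ * |∫ ξ : ℝ, g ξ * Real.sin (x * ξ)|
        ≤ (Real.sqrt (2 * Real.pi))⁻¹ * (A * x ^ (-m₀)) := by
          exact mul_le_mul_of_nonneg_left (key x hx) (by positivity)
      _ = K * x ^ (-m₀) := by rw [hKdef]; ring
  · intro x hx hx1
    have h1 : |x * H x| ≤ K * x ^ (-m₀) := by
      rw [hH x hx, abs_mul, abs_neg, abs_inv, abs_of_pos hsq]
      calc (Real.sqrt (2 * Real.pi))⁻¹ * |∫ ξ : ℝ, g ξ * Real.sin (x * ξ)|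
          ≤ (Real.sqrt (2 * Real.pi))⁻¹ * (A * x ^ (-m₀)) :=
            mul_le_mul_of_nonneg_left (key x hx) (by positivity)
        _ = K * x ^ (-m₀) := by rw [hKdef]; ring
    have h2 : |x * H x| = x * |H x| := by rw [abs_mul, abs_of_pos hx]
    rw [h2] at h1
    have h3 : |H x| ≤ K * x ^ (-m₀) / x := by
      rw [le_div_iff₀ hx]; linarith
    calc |H x| ≤ K * x ^ (-m₀) / x := h3
      _ = K * (x ^ (-m₀) * x⁻¹) := by ring
      _ = K * x ^ (-1 - m₀) := by
          rw [← Real.rpow_neg_one x, ← Real.rpow_add hx]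
          ring_nf
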